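/- Let n = r be even, r ≥ 2. Then H_D is invertible over ℚ and its inverse, with entries indexed by a, b ∈ {1, …, r²}, satisfies: (H_D⁻¹)_{ab} = (H_D⁻¹)_{a+c, b+c} for all admissible c ∈ ℤ (entries are constant along diagonals); (H_D⁻¹)_{aa} = 0; and for b > a, writing m = (b−a) mod (r+1), one has (H_D⁻¹)_{ab} = 0 if m = 1, (H_D⁻¹)_{ab} = 1 if m = 0 or m is odd with m ≥ 3, and (H_D⁻¹)_{ab} = −1 if m is even with m ≥ 2; moreover (H_D⁻¹)_{ba} = −(H_D⁻¹)_{ab}. -/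

import Mathlib

set_option maxHeartbeats 1000000

open Finset

private def hDq (r : ℕ) (m : ℤ) : ℚ :=
  if m = 1 then 0 else if m = 0 ∨ m % 2 = 1 then 1 else -1

private def gDq (r : ℕ) (d : ℤ) : ℚ :=
  if 0 < d then hDq r (d % ((r : ℤ) + 1))
  else if d < 0 then -hDq r ((-d) % ((r : ℤ) + 1)) else 0

private def phiq (r : ℕ) (d : ℤ) : ℚ :=
  if d % ((r : ℤ) + 1) % 2 = 0 ∧ ¬ d % ((r : ℤ) + 1) = (if 0 ≤ d then 0 else (r : ℤ))
  then -1 else 0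

private def gamq (r : ℕ) (y : ℤ) : ℚ :=
  if 0 ≤ y then
    (if 2 ≤ y % (2 * (r : ℤ) + 2) ∧ y % (2 * (r : ℤ) + 2) ≤ (r : ℤ) + 2 then
      (if y % (2 * (r : ℤ) + 2) % 2 = 0 then -1 else 1) else 0)
  else
    (if y % (2 * (r : ℤ) + 2) ≤ (r : ℤ) then
      (if y % (2 * (r : ℤ) + 2) % 2 = 0 then -1 else 1) else 0)

private lemma emod_decomp {M q m : ℤ} (h0 : 0 ≤ m) (h1 : m < M) :
    (q * M + m) % M = m := by
  have h : q * M + m = m + M * q := by ring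
  rw [h, Int.add_mul_emod_self_left, Int.emod_eq_of_lt h0 h1]

private lemma quot_sign {M q m : ℤ} (hM : 0 < M) (h0 : 0 ≤ m) (h1 : m < M) :
    0 ≤ q * M + m ↔ 0 ≤ q := by
  constructor
  · intro h
    by_contra hq
    push_neg at hq
    have hq1 : q ≤ -1 := by omega
    have h2 : q * M ≤ -1 * M := mul_le_mul_of_nonneg_right hq1 hM.le
    have h3 : (-1 : ℤ) * M = -M := by ring
    linarith
  · intro h
    have : 0 ≤ q * M := mul_nonneg h hM.le
    linarith

private lemma pos_of_q {M q m : ℤ} (hM : 0 < M) (h0 : 0 ≤ m) (hq : 1 ≤ q) :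
    0 < q * M + m := by
  have h2 : 1 * M ≤ q * M := mul_le_mul_of_nonneg_right hq hM.le
  have h3 : (1 : ℤ) * M = M := by ring
  linarith

private lemma neg_of_q {M q m : ℤ} (hM : 0 < M) (h1 : m < M) (hq : q ≤ -1) :
    q * M + m < 0 := by
  have h2 : q * M ≤ -1 * M := mul_le_mul_of_nonneg_right hq hM.le
  have h3 : (-1 : ℤ) * M = -M := by ring
  linarith

private lemma quot_uniq {M q m q' m' : ℤ} (hM : 0 < M) (h0 : 0 ≤ m) (h1 : m < M)
    (h0' : 0 ≤ m') (h1' : m' < M) (h : q * M + m = q' * M + m') : q = q' ∧ m = m' := by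
  have key : (q' - q) * M = m - m' := by linear_combination -h
  have hq : q = q' := by
    rcases lt_trichotomy q q' with hlt | he | hgt
    · exfalso
      have e1 : (1 : ℤ) ≤ q' - q := by omega
      have e2 : 1 * M ≤ (q' - q) * M := mul_le_mul_of_nonneg_right e1 hM.le
      have e3 : (1 : ℤ) * M = M := by ring
      linarith
    · exact he
    · exfalso
      have e1 : q' - q ≤ -1 := by omega
      have e2 : (q' - q) * M ≤ -1 * M := mul_le_mul_of_nonneg_right e1 hM.le
      have e3 : (-1 : ℤ) * M = -M := by ring
      linarith
  refine ⟨hq, ?_⟩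
  rw [hq] at key
  simp at key
  omega

private lemma phiq_eval {r : ℕ} {d q m : ℤ} (hd : d = q * ((r : ℤ) + 1) + m)
    (h0 : 0 ≤ m) (h1 : m < (r : ℤ) + 1) :
    phiq r d = if m % 2 = 0 ∧ ¬ m = (if 0 ≤ q then 0 else (r : ℤ)) then -1 else 0 := by
  have hM : (0 : ℤ) < (r : ℤ) + 1 := by omega
  subst hd
  unfold phiq
  rw [emod_decomp h0 h1]; simp only [quot_sign hM h0 h1]

private lemma gamq_eval {r : ℕ} {y q m : ℤ} (hy : y = q * (2 * (r : ℤ) + 2) + m)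
    (h0 : 0 ≤ m) (h1 : m < 2 * (r : ℤ) + 2) :
    gamq r y = if 0 ≤ q then
      (if 2 ≤ m ∧ m ≤ (r : ℤ) + 2 then (if m % 2 = 0 then -1 else 1) else 0)
    else
      (if m ≤ (r : ℤ) then (if m % 2 = 0 then -1 else 1) else 0) := by
  have hM : (0 : ℤ) < 2 * (r : ℤ) + 2 := by omega
  subst hy
  unfold gamq
  rw [emod_decomp h0 h1]; simp only [quot_sign hM h0 h1]

private lemma gDq_eval {r : ℕ} {d q m : ℤ} (hd : d = q * ((r : ℤ) + 1) + m)
    (h0 : 0 ≤ m) (h1 : m < (r : ℤ) + 1) :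
    gDq r d = if 0 ≤ q then (if q = 0 ∧ m = 0 then 0 else hDq r m)
      else -hDq r (if m = 0 then 0 else (r : ℤ) + 1 - m) := by
  have hM : (0 : ℤ) < (r : ℤ) + 1 := by omega
  subst hd
  unfold gDq
  by_cases hq : 0 ≤ q
  · rw [if_pos hq]
    by_cases hz : q = 0 ∧ m = 0
    · rw [if_pos hz]
      obtain ⟨hz1, hz2⟩ := hz
      subst hz1; subst hz2
      norm_num
    · rw [if_neg hz]
      have hpos : 0 < q * ((r : ℤ) + 1) + m := by
        rcases eq_or_lt_of_le hq with he | hl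
        · have hm : 0 < m := by
            rcases eq_or_lt_of_le h0 with he2 | hl2
            · exact absurd ⟨he.symm, he2.symm⟩ hz
            · exact hl2
          nlinarith
        · exact pos_of_q hM h0 (by omega)
      rw [if_pos hpos, emod_decomp h0 h1]
  · rw [if_neg hq]
    push_neg at hq
    have hneg : q * ((r : ℤ) + 1) + m < 0 := neg_of_q hM h1 (by omega)
    rw [if_neg (by omega : ¬ 0 < q * ((r : ℤ) + 1) + m), if_pos hneg]
    by_cases hm : m = 0
    · subst hm
      rw [if_pos rfl]
      have : -(q * ((r : ℤ) + 1) + 0) = (-q) * ((r : ℤ) + 1) + 0 := by ring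
      rw [this, emod_decomp (by omega) hM]
    · rw [if_neg hm]
      have : -(q * ((r : ℤ) + 1) + m) = (-q - 1) * ((r : ℤ) + 1) + ((r : ℤ) + 1 - m) := by ring
      rw [this, emod_decomp (by omega) (by omega)]

private lemma gDq_odd (r : ℕ) (d : ℤ) : gDq r (-d) = -gDq r d := by
  unfold gDq
  rcases lt_trichotomy d 0 with h | h | h
  · rw [if_pos (by omega : 0 < -d), if_neg (by omega : ¬ 0 < d), if_pos h, neg_neg]
  · subst h; norm_num
  · rw [if_neg (by omega : ¬ 0 < -d), if_pos (by omega : -d < 0), if_pos h, neg_neg]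

private lemma phi_step (r : ℕ) (hr : 2 ≤ r) (hre : Even r) (d : ℤ) :
    phiq r d - phiq r (d - 1) = gDq r d := by
  obtain ⟨s, hs⟩ := hre
  have hsz : (r : ℤ) = (s : ℤ) + (s : ℤ) := by exact_mod_cast congrArg (Nat.cast : ℕ → ℤ) hs
  have hsr : (2 : ℤ) ≤ (r : ℤ) := by exact_mod_cast hr
  have hM : (0 : ℤ) < (r : ℤ) + 1 := by omega
  set q := d / ((r : ℤ) + 1) with hqdef
  set m := d % ((r : ℤ) + 1) with hmdef
  have hd : d = q * ((r : ℤ) + 1) + m := by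
    rw [hqdef, hmdef, mul_comm]
    exact (Int.mul_ediv_add_emod d ((r : ℤ) + 1)).symm
  have hm0 : 0 ≤ m := Int.emod_nonneg d (by omega)
  have hm1 : m < (r : ℤ) + 1 := Int.emod_lt_of_pos d hM
  rw [gDq_eval hd hm0 hm1, phiq_eval hd hm0 hm1]
  by_cases hmz : 1 ≤ m
  · have hd' : d - 1 = q * ((r : ℤ) + 1) + (m - 1) := by rw [hd]; ring
    rw [phiq_eval hd' (by omega) (by omega)]
    unfold hDq
    clear_value q m
    clear hd hd' hqdef hmdef
    split_ifs <;> first | (exfalso; omega) | norm_num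
  · have hd' : d - 1 = (q - 1) * ((r : ℤ) + 1) + (r : ℤ) := by rw [hd]; ring_nf; omega
    rw [phiq_eval hd' (by omega) (by omega)]
    unfold hDq
    clear_value q m
    clear hd hd' hqdef hmdef
    split_ifs <;> first | (exfalso; omega) | norm_num

private lemma gam_step (r : ℕ) (hr : 2 ≤ r) (hre : Even r) (y : ℤ) :
    gamq r y - gamq r (y - (r : ℤ)) = gDq r y := by
  obtain ⟨s, hs⟩ := hre
  have hsz : (r : ℤ) = (s : ℤ) + (s : ℤ) := by exact_mod_cast congrArg (Nat.cast : ℕ → ℤ) hs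
  have hsr : (2 : ℤ) ≤ (r : ℤ) := by exact_mod_cast hr
  have hM : (0 : ℤ) < 2 * (r : ℤ) + 2 := by omega
  set q := y / (2 * (r : ℤ) + 2) with hqdef
  set m := y % (2 * (r : ℤ) + 2) with hmdef
  have hd : y = q * (2 * (r : ℤ) + 2) + m := by
    rw [hqdef, hmdef, mul_comm]
    exact (Int.mul_ediv_add_emod y (2 * (r : ℤ) + 2)).symm
  have hm0 : 0 ≤ m := Int.emod_nonneg y (by omega)
  have hm1 : m < 2 * (r : ℤ) + 2 := Int.emod_lt_of_pos y hM
  rw [gamq_eval hd hm0 hm1]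
  by_cases hg : m ≤ (r : ℤ)
  · have hgd : y = (2 * q) * ((r : ℤ) + 1) + m := by rw [hd]; ring
    rw [gDq_eval hgd hm0 (by omega)]
    by_cases hg2 : (r : ℤ) ≤ m
    · have hd' : y - (r : ℤ) = q * (2 * (r : ℤ) + 2) + (m - (r : ℤ)) := by rw [hd]; ring
      rw [gamq_eval hd' (by omega) (by omega)]
      unfold hDq
      clear_value q m
      clear hd hd' hgd hqdef hmdef
      split_ifs <;> first | (exfalso; omega) | norm_num
    · have hd' : y - (r : ℤ) = (q - 1) * (2 * (r : ℤ) + 2) + (m + (r : ℤ) + 2) := by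
        rw [hd]; ring
      rw [gamq_eval hd' (by omega) (by omega)]
      unfold hDq
      clear_value q m
      clear hd hd' hgd hqdef hmdef
      split_ifs <;> first | (exfalso; omega) | norm_num
  · have hgd : y = (2 * q + 1) * ((r : ℤ) + 1) + (m - (r : ℤ) - 1) := by rw [hd]; ring
    rw [gDq_eval hgd (by omega) (by omega)]
    have hd' : y - (r : ℤ) = q * (2 * (r : ℤ) + 2) + (m - (r : ℤ)) := by rw [hd]; ring
    rw [gamq_eval hd' (by omega) (by omega)]
    unfold hDq
    clear_value q m
    clear hd hd' hgd hqdef hmdef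
    split_ifs <;> first | (exfalso; omega) | norm_num

private lemma phi_l4 (r : ℕ) (hr : 2 ≤ r) (hre : Even r) (d : ℤ) :
    phiq r (d - (r : ℤ) - 1) - phiq r d =
      (if d = (r : ℤ) then 1 else 0) - (if d = 0 then 1 else 0) := by
  obtain ⟨s, hs⟩ := hre
  have hsz : (r : ℤ) = (s : ℤ) + (s : ℤ) := by exact_mod_cast congrArg (Nat.cast : ℕ → ℤ) hs
  have hsr : (2 : ℤ) ≤ (r : ℤ) := by exact_mod_cast hr
  have hM : (0 : ℤ) < (r : ℤ) + 1 := by omega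
  set q := d / ((r : ℤ) + 1) with hqdef
  set m := d % ((r : ℤ) + 1) with hmdef
  have hd : d = q * ((r : ℤ) + 1) + m := by
    rw [hqdef, hmdef, mul_comm]
    exact (Int.mul_ediv_add_emod d ((r : ℤ) + 1)).symm
  have hm0 : 0 ≤ m := Int.emod_nonneg d (by omega)
  have hm1 : m < (r : ℤ) + 1 := Int.emod_lt_of_pos d hM
  have hd' : d - (r : ℤ) - 1 = (q - 1) * ((r : ℤ) + 1) + m := by rw [hd]; ring
  have e1 : d = (r : ℤ) ↔ (q = 0 ∧ m = (r : ℤ)) := by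
    constructor
    · intro h
      have h2 : q * ((r : ℤ) + 1) + m = 0 * ((r : ℤ) + 1) + (r : ℤ) := by
        rw [← hd, h]; ring
      exact quot_uniq hM hm0 hm1 (by omega) (by omega) h2
    · rintro ⟨h1, h2⟩
      rw [hd, h1, h2]; ring
  have e2 : d = 0 ↔ (q = 0 ∧ m = 0) := by
    constructor
    · intro h
      have h2 : q * ((r : ℤ) + 1) + m = 0 * ((r : ℤ) + 1) + 0 := by
        rw [← hd, h]; ring
      exact quot_uniq hM hm0 hm1 (by omega) (by omega) h2
    · rintro ⟨h1, h2⟩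
      rw [hd, h1, h2]; ring
  simp only [e1, e2]
  rw [phiq_eval hd hm0 hm1, phiq_eval hd' hm0 hm1]
  clear hd hd' hqdef hmdef e1 e2
  split_ifs <;> first | (exfalso; omega) | norm_num

private lemma gam_l3 (r : ℕ) (hr : 2 ≤ r) (hre : Even r) (w : ℤ)
    (hw1 : 1 - (r : ℤ) ≤ w) (hw2 : w ≤ (r : ℤ) * (r : ℤ) - 1) :
    gamq r (w - (r : ℤ)) - gamq r (w - (r : ℤ) * (r : ℤ)) =
      (if w = 0 then 1 else 0) - (if w = -1 then 1 else 0) := by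
  obtain ⟨s, hs⟩ := hre
  have hsz : (r : ℤ) = (s : ℤ) + (s : ℤ) := by exact_mod_cast congrArg (Nat.cast : ℕ → ℤ) hs
  have hsr : (2 : ℤ) ≤ (r : ℤ) := by exact_mod_cast hr
  have hss : (1 : ℤ) ≤ (s : ℤ) := by omega
  have hM : (0 : ℤ) < 2 * (r : ℤ) + 2 := by omega
  set q := (w - (r : ℤ)) / (2 * (r : ℤ) + 2) with hqdef
  set m := (w - (r : ℤ)) % (2 * (r : ℤ) + 2) with hmdef
  have hd1 : w - (r : ℤ) = q * (2 * (r : ℤ) + 2) + m := by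
    rw [hqdef, hmdef, mul_comm]
    exact (Int.mul_ediv_add_emod _ _).symm
  have hm0 : 0 ≤ m := Int.emod_nonneg _ (by omega)
  have hm1 : m < 2 * (r : ℤ) + 2 := Int.emod_lt_of_pos _ hM
  have key : (s : ℤ) * (2 * (r : ℤ) + 2) = (r : ℤ) * (r : ℤ) + (r : ℤ) := by
    rw [show (r : ℤ) = 2 * (s : ℤ) by omega]; ring
  have hq1 : -1 ≤ q := by
    by_contra hc
    push_neg at hc
    have h2 : q ≤ -2 := by omega
    have h3 : q * (2 * (r : ℤ) + 2) ≤ -2 * (2 * (r : ℤ) + 2) :=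
      mul_le_mul_of_nonneg_right h2 (by omega)
    linarith
  have hq2 : q ≤ (s : ℤ) - 1 := by
    by_contra hc
    push_neg at hc
    have h2 : (s : ℤ) ≤ q := by omega
    have h3 : (s : ℤ) * (2 * (r : ℤ) + 2) ≤ q * (2 * (r : ℤ) + 2) :=
      mul_le_mul_of_nonneg_right h2 (by omega)
    nlinarith
  have e0 : w = 0 ↔ (q = -1 ∧ m = (r : ℤ) + 2) := by
    constructor
    · intro h
      have h2 : q * (2 * (r : ℤ) + 2) + m = (-1) * (2 * (r : ℤ) + 2) + ((r : ℤ) + 2) := by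
        rw [← hd1, h]; ring
      exact quot_uniq hM hm0 hm1 (by omega) (by omega) h2
    · rintro ⟨h1, h2⟩
      rw [h1, h2] at hd1
      linarith
  have e1 : w = -1 ↔ (q = -1 ∧ m = (r : ℤ) + 1) := by
    constructor
    · intro h
      have h2 : q * (2 * (r : ℤ) + 2) + m = (-1) * (2 * (r : ℤ) + 2) + ((r : ℤ) + 1) := by
        rw [← hd1, h]; ring
      exact quot_uniq hM hm0 hm1 (by omega) (by omega) h2
    · rintro ⟨h1, h2⟩
      rw [h1, h2] at hd1
      linarith
  simp only [e0, e1]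
  rw [gamq_eval hd1 hm0 hm1]
  by_cases hm2 : 2 ≤ m
  · have hq3 : q ≤ (s : ℤ) - 2 := by
      by_contra hc
      push_neg at hc
      have hq' : q = (s : ℤ) - 1 := by omega
      rw [hq'] at hd1
      have h4 : ((s : ℤ) - 1) * (2 * (r : ℤ) + 2) =
          (s : ℤ) * (2 * (r : ℤ) + 2) - (2 * (r : ℤ) + 2) := by ring
      rw [h4, key] at hd1
      linarith
    have hd2 : w - (r : ℤ) * (r : ℤ) = (q - (s : ℤ) + 1) * (2 * (r : ℤ) + 2) + (m - 2) := by
      rw [show (q - (s : ℤ) + 1) * (2 * (r : ℤ) + 2) + (m - 2) =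
        (q * (2 * (r : ℤ) + 2) + m) - ((s : ℤ) * (2 * (r : ℤ) + 2)) + (2 * (r : ℤ) + 2) - 2
        from by ring, ← hd1, key]
      ring
    rw [gamq_eval hd2 (by omega) (by omega)]
    have hlow : q = -1 → 3 ≤ m := by
      intro h
      have hd1' := hd1
      rw [h] at hd1'
      omega
    clear_value q m
    clear hd1 hd2 hqdef hmdef e0 e1 key hw1 hw2
    split_ifs <;> first | (exfalso; omega) | norm_num
  · have hd2 : w - (r : ℤ) * (r : ℤ) = (q - (s : ℤ)) * (2 * (r : ℤ) + 2) + (m + 2 * (r : ℤ)) := by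
      rw [show (q - (s : ℤ)) * (2 * (r : ℤ) + 2) + (m + 2 * (r : ℤ)) =
        (q * (2 * (r : ℤ) + 2) + m) - ((s : ℤ) * (2 * (r : ℤ) + 2)) + 2 * (r : ℤ)
        from by ring, ← hd1, key]
      ring
    rw [gamq_eval hd2 (by omega) (by omega)]
    have hlow : q = -1 → 3 ≤ m := by
      intro h
      have hd1' := hd1
      rw [h] at hd1'
      omega
    clear_value q m
    clear hd1 hd2 hqdef hmdef e0 e1 key hw1 hw2
    split_ifs <;> first | (exfalso; omega) | norm_num

private def HfD (r : ℕ) (a b : ℕ) : ℚ :=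
  if a / r = b / r then 0
  else if a / r < b / r then (if b % r ≤ a % r then 1 else 0)
  else (if a % r ≤ b % r then -1 else 0)

private def SsumD (r : ℕ) (a c : ℕ) : ℚ :=
  ∑ b ∈ Finset.range (r * r), HfD r a b * gDq r ((c : ℤ) - (b : ℤ))

private lemma sumg (r : ℕ) (hr : 2 ≤ r) (hre : Even r) (X : ℤ) (n : ℕ) :
    ∑ j ∈ Finset.range n, gDq r (X - (j : ℤ)) = phiq r X - phiq r (X - (n : ℤ)) := by
  induction n with
  | zero => simp
  | succ n ih =>
    rw [Finset.sum_range_succ, ih]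
    have h := phi_step r hr hre (X - (n : ℤ))
    have e : X - ((n : ℕ) + 1 : ℕ) = X - (n : ℤ) - 1 := by push_cast; ring
    rw [e]
    linarith

private lemma sumgr (r : ℕ) (hr : 2 ≤ r) (hre : Even r) (X : ℤ) (n : ℕ) :
    ∑ β ∈ Finset.range n, gDq r (X - (β : ℤ) * (r : ℤ)) =
      gamq r X - gamq r (X - (n : ℤ) * (r : ℤ)) := by
  induction n with
  | zero => simp
  | succ n ih =>
    rw [Finset.sum_range_succ, ih]
    have h := gam_step r hr hre (X - (n : ℤ) * (r : ℤ))
    have e : X - ((n : ℕ) + 1 : ℕ) * (r : ℤ) = X - (n : ℤ) * (r : ℤ) - (r : ℤ) := by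
      push_cast; ring
    rw [e]
    linarith

private lemma sum_split (r : ℕ) (f : ℕ → ℚ) (n : ℕ) :
    ∑ b ∈ Finset.range (n * r), f b =
      ∑ β ∈ Finset.range n, ∑ j ∈ Finset.range r, f (β * r + j) := by
  induction n with
  | zero => simp
  | succ n ih =>
    have e : (n + 1) * r = n * r + r := by ring
    rw [e, Finset.sum_range_add, ih, Finset.sum_range_succ]

private lemma sum_tail (F : ℕ → ℚ) (i r : ℕ) (h : i ≤ r) :
    ∑ j ∈ Finset.range r, (if i ≤ j then F j else 0) = ∑ j ∈ Finset.range (r - i), F (i + j) := by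
  rw [Finset.range_eq_Ico, ← Finset.sum_Ico_consecutive _ (Nat.zero_le i) h]
  have h1 : ∑ j ∈ Finset.Ico 0 i, (if i ≤ j then F j else 0) = 0 := by
    apply Finset.sum_eq_zero
    intro j hj
    rw [Finset.mem_Ico] at hj
    rw [if_neg (by omega)]
  have h2 : ∑ j ∈ Finset.Ico i r, (if i ≤ j then F j else 0) = ∑ j ∈ Finset.Ico i r, F j := by
    apply Finset.sum_congr rfl
    intro j hj
    rw [Finset.mem_Ico] at hj
    rw [if_pos (by omega)]
  rw [h1, h2, Finset.sum_Ico_eq_sum_range, zero_add, Finset.range_eq_Ico]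

private lemma sum_head (F : ℕ → ℚ) (i r : ℕ) (h : i < r) :
    ∑ j ∈ Finset.range r, (if j ≤ i then F j else 0) = ∑ j ∈ Finset.range (i + 1), F j := by
  rw [Finset.range_eq_Ico,
    ← Finset.sum_Ico_consecutive _ (Nat.zero_le (i + 1)) (by omega : i + 1 ≤ r)]
  have h1 : ∑ j ∈ Finset.Ico (i + 1) r, (if j ≤ i then F j else 0) = 0 := by
    apply Finset.sum_eq_zero
    intro j hj
    rw [Finset.mem_Ico] at hj
    rw [if_neg (by omega)]
  have h2 : ∑ j ∈ Finset.Ico 0 (i + 1), (if j ≤ i then F j else 0) =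
      ∑ j ∈ Finset.Ico 0 (i + 1), F j := by
    apply Finset.sum_congr rfl
    intro j hj
    rw [Finset.mem_Ico] at hj
    rw [if_pos (by omega)]
  rw [h1, h2, add_zero, Finset.range_eq_Ico]

private lemma Hf_eval (r : ℕ) (hr : 2 ≤ r) {α i β j : ℕ} (hi : i < r) (hj : j < r) :
    HfD r (α * r + i) (β * r + j) =
      if β = α then 0
      else if α < β then (if j ≤ i then 1 else 0)
      else (if i ≤ j then -1 else 0) := by
  have hr0 : 0 < r := by omega
  unfold HfD
  rw [show α * r + i = r * α + i by ring, show β * r + j = r * β + j by ring,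
    Nat.mul_add_div hr0, Nat.mul_add_div hr0, Nat.mul_add_mod, Nat.mul_add_mod,
    Nat.div_eq_of_lt hi, Nat.div_eq_of_lt hj, Nat.mod_eq_of_lt hi, Nat.mod_eq_of_lt hj]
  simp only [Nat.add_zero]
  split_ifs <;> first | rfl | omega

private lemma outer_sum (r : ℕ) (hr : 2 ≤ r) (hre : Even r) (X : ℤ) :
    ∑ β ∈ Finset.range r, (if β = 0 then 0 else gDq r (X - (β : ℤ) * (r : ℤ))) =
      gamq r (X - (r : ℤ)) - gamq r (X - (r : ℤ) * (r : ℤ)) := by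
  have h1 : ∀ β ∈ Finset.range r, (if β = 0 then (0 : ℚ) else gDq r (X - (β : ℤ) * (r : ℤ)))
      = gDq r (X - (β : ℤ) * (r : ℤ)) -
        (if β = 0 then gDq r (X - (β : ℤ) * (r : ℤ)) else 0) := by
    intro β _
    split_ifs <;> ring
  rw [Finset.sum_congr rfl h1, Finset.sum_sub_distrib,
    Finset.sum_ite_eq' (Finset.range r) 0 (fun β => gDq r (X - (β : ℤ) * (r : ℤ))),
    if_pos (Finset.mem_range.2 (by omega)), sumgr r hr hre X r]
  have h2 := gam_step r hr hre X
  have e : X - ((0 : ℕ) : ℤ) * (r : ℤ) = X := by push_cast; ring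
  rw [e]
  linarith

private lemma base0 (r : ℕ) (hr : 2 ≤ r) (hre : Even r) (c : ℕ) :
    SsumD r 0 c = gamq r ((c : ℤ) - (r : ℤ)) - gamq r ((c : ℤ) - (r : ℤ) * (r : ℤ)) := by
  unfold SsumD
  rw [sum_split]
  have key : ∀ β ∈ Finset.range r,
      (∑ j ∈ Finset.range r, HfD r 0 (β * r + j) * gDq r ((c : ℤ) - ((β * r + j : ℕ) : ℤ)))
      = (if β = 0 then 0 else gDq r ((c : ℤ) - (β : ℤ) * (r : ℤ))) := by
    intro β hβ
    by_cases hb : β = 0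
    · subst hb
      rw [if_pos rfl]
      apply Finset.sum_eq_zero
      intro j hj
      have hj' := Finset.mem_range.1 hj
      have he := Hf_eval r hr (α := 0) (i := 0) (β := 0) (j := j) (by omega) hj'
      simp only [Nat.zero_mul, Nat.zero_add] at he
      norm_num at he
      simp only [Nat.zero_mul, Nat.zero_add]
      rw [he, zero_mul]
    · rw [if_neg hb]
      have hs : ∀ j ∈ Finset.range r, HfD r 0 (β * r + j) * gDq r ((c : ℤ) - ((β * r + j : ℕ) : ℤ))
          = (if j = 0 then gDq r ((c : ℤ) - ((β * r + j : ℕ) : ℤ)) else 0) := by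
        intro j hj
        have hj' := Finset.mem_range.1 hj
        have he := Hf_eval r hr (α := 0) (i := 0) (β := β) (j := j) (by omega) hj'
        simp only [Nat.zero_mul, Nat.zero_add] at he
        rw [he, if_neg hb, if_pos (by omega : 0 < β)]
        split_ifs <;> first | (exfalso; omega) | ring
      rw [Finset.sum_congr rfl hs,
        Finset.sum_ite_eq' (Finset.range r) 0
          (fun j => gDq r ((c : ℤ) - ((β * r + j : ℕ) : ℤ))),
        if_pos (Finset.mem_range.2 (by omega))]
      have earg : (c : ℤ) - ((β * r + 0 : ℕ) : ℤ) = (c : ℤ) - (β : ℤ) * (r : ℤ) := by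
        push_cast; ring
      rw [earg]
  rw [Finset.sum_congr rfl key, outer_sum r hr hre]

private lemma Hf_stepI (r : ℕ) (hr : 2 ≤ r) {i j β : ℕ} (h : i + 1 < r) (hj : j < r) :
    HfD r (i + 1) (β * r + j) = HfD r i (β * r + j)
      + (if ¬ β = 0 ∧ j = i + 1 then 1 else 0) := by
  have e1 := Hf_eval r hr (α := 0) (i := i + 1) (β := β) (j := j) h hj
  have e2 := Hf_eval r hr (α := 0) (i := i) (β := β) (j := j) (by omega) hj
  simp only [Nat.zero_mul, Nat.zero_add] at e1 e2
  rw [e1, e2]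
  split_ifs <;> first | (exfalso; omega) | norm_num

private lemma stepI (r : ℕ) (hr : 2 ≤ r) (hre : Even r) {i : ℕ} (h : i + 1 < r) (c : ℕ) :
    SsumD r (i + 1) c = SsumD r i c
      + (gamq r ((c : ℤ) - (i : ℤ) - 1 - (r : ℤ))
        - gamq r ((c : ℤ) - (i : ℤ) - 1 - (r : ℤ) * (r : ℤ))) := by
  unfold SsumD
  rw [sum_split, sum_split]
  have key : ∀ β ∈ Finset.range r,
      (∑ j ∈ Finset.range r, HfD r (i + 1) (β * r + j) * gDq r ((c : ℤ) - ((β * r + j : ℕ) : ℤ)))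
      = (∑ j ∈ Finset.range r, HfD r i (β * r + j) * gDq r ((c : ℤ) - ((β * r + j : ℕ) : ℤ)))
        + (if β = 0 then 0 else gDq r (((c : ℤ) - (i : ℤ) - 1) - (β : ℤ) * (r : ℤ))) := by
    intro β hβ
    have hs : ∀ j ∈ Finset.range r,
        HfD r (i + 1) (β * r + j) * gDq r ((c : ℤ) - ((β * r + j : ℕ) : ℤ))
        = HfD r i (β * r + j) * gDq r ((c : ℤ) - ((β * r + j : ℕ) : ℤ))
          + (if ¬ β = 0 ∧ j = i + 1 then gDq r ((c : ℤ) - ((β * r + j : ℕ) : ℤ)) else 0) := by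
      intro j hj
      rw [Hf_stepI r hr h (Finset.mem_range.1 hj)]
      split_ifs <;> ring
    rw [Finset.sum_congr rfl hs, Finset.sum_add_distrib]
    congr 1
    by_cases hb : β = 0
    · rw [if_pos hb]
      apply Finset.sum_eq_zero
      intro j hj
      rw [if_neg (by tauto)]
    · rw [if_neg hb]
      have hs2 : ∀ j ∈ Finset.range r,
          (if ¬ β = 0 ∧ j = i + 1 then gDq r ((c : ℤ) - ((β * r + j : ℕ) : ℤ)) else 0)
          = (if j = i + 1 then gDq r ((c : ℤ) - ((β * r + j : ℕ) : ℤ)) else 0) := by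
        intro j hj
        split_ifs <;> first | rfl | tauto
      rw [Finset.sum_congr rfl hs2,
        Finset.sum_ite_eq' (Finset.range r) (i + 1)
          (fun j => gDq r ((c : ℤ) - ((β * r + j : ℕ) : ℤ))),
        if_pos (Finset.mem_range.2 h)]
      have earg : (c : ℤ) - ((β * r + (i + 1) : ℕ) : ℤ)
          = (c : ℤ) - (i : ℤ) - 1 - (β : ℤ) * (r : ℤ) := by
        push_cast; ring
      rw [earg]
  rw [Finset.sum_congr rfl key, Finset.sum_add_distrib, outer_sum r hr hre]

private lemma Hf_stepA (r : ℕ) (hr : 2 ≤ r) {α i β j : ℕ} (hα : α + 1 < r) (hi : i < r)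
    (hj : j < r) :
    HfD r ((α + 1) * r + i) (β * r + j) = HfD r (α * r + i) (β * r + j)
      + (if β = α ∧ i ≤ j then -1 else 0) + (if β = α + 1 ∧ j ≤ i then -1 else 0) := by
  rw [Hf_eval r hr hi hj, Hf_eval r hr hi hj]
  split_ifs <;> first | (exfalso; omega) | norm_num

private lemma inner_tail (r : ℕ) (hr : 2 ≤ r) (hre : Even r) (α i : ℕ) (hir : i < r)
    (c : ℕ) :
    ∑ j ∈ Finset.range r, (if i ≤ j then -(gDq r ((c : ℤ) - ((α * r + j : ℕ) : ℤ))) else 0)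
      = -(phiq r ((c : ℤ) - (α : ℤ) * (r : ℤ) - (i : ℤ))
          - phiq r ((c : ℤ) - (α : ℤ) * (r : ℤ) - (r : ℤ))) := by
  rw [sum_tail _ i r hir.le]
  have e : ∀ j ∈ Finset.range (r - i), -(gDq r ((c : ℤ) - ((α * r + (i + j) : ℕ) : ℤ)))
      = -(gDq r (((c : ℤ) - (α : ℤ) * (r : ℤ) - (i : ℤ)) - (j : ℤ))) := by
    intro j _
    congr 2
    push_cast
    ring
  rw [Finset.sum_congr rfl e, Finset.sum_neg_distrib, sumg r hr hre]
  have e2 : (c : ℤ) - (α : ℤ) * (r : ℤ) - (i : ℤ) - ((r - i : ℕ) : ℤ)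
      = (c : ℤ) - (α : ℤ) * (r : ℤ) - (r : ℤ) := by
    push_cast [Nat.cast_sub hir.le]
    ring
  rw [e2]

private lemma inner_head (r : ℕ) (hr : 2 ≤ r) (hre : Even r) (α i : ℕ) (hir : i < r)
    (c : ℕ) :
    ∑ j ∈ Finset.range r, (if j ≤ i then -(gDq r ((c : ℤ) - (((α + 1) * r + j : ℕ) : ℤ))) else 0)
      = -(phiq r ((c : ℤ) - ((α : ℤ) + 1) * (r : ℤ))
          - phiq r ((c : ℤ) - ((α : ℤ) + 1) * (r : ℤ) - ((i : ℤ) + 1))) := by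
  rw [sum_head _ i r hir]
  have e : ∀ j ∈ Finset.range (i + 1), -(gDq r ((c : ℤ) - (((α + 1) * r + j : ℕ) : ℤ)))
      = -(gDq r (((c : ℤ) - ((α : ℤ) + 1) * (r : ℤ)) - (j : ℤ))) := by
    intro j _
    congr 2
    push_cast
    ring
  rw [Finset.sum_congr rfl e, Finset.sum_neg_distrib, sumg r hr hre]
  have e2 : (c : ℤ) - ((α : ℤ) + 1) * (r : ℤ) - ((i + 1 : ℕ) : ℤ)
      = (c : ℤ) - ((α : ℤ) + 1) * (r : ℤ) - ((i : ℤ) + 1) := by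
    push_cast
    ring
  rw [e2]

private lemma stepA' (r : ℕ) (hr : 2 ≤ r) (hre : Even r) {α i : ℕ} (hα1 : α + 1 < r)
    (hir : i < r) (c : ℕ) :
    SsumD r ((α + 1) * r + i) c = SsumD r (α * r + i) c
      + (phiq r ((c : ℤ) - (α : ℤ) * (r : ℤ) - (i : ℤ) - (r : ℤ) - 1)
        - phiq r ((c : ℤ) - (α : ℤ) * (r : ℤ) - (i : ℤ))) := by
  unfold SsumD
  rw [sum_split, sum_split]
  set T1 : ℚ := -(phiq r ((c : ℤ) - (α : ℤ) * (r : ℤ) - (i : ℤ))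
      - phiq r ((c : ℤ) - (α : ℤ) * (r : ℤ) - (r : ℤ))) with hT1
  set T2 : ℚ := -(phiq r ((c : ℤ) - ((α : ℤ) + 1) * (r : ℤ))
      - phiq r ((c : ℤ) - ((α : ℤ) + 1) * (r : ℤ) - ((i : ℤ) + 1))) with hT2
  have key : ∀ β ∈ Finset.range r,
      (∑ j ∈ Finset.range r,
        HfD r ((α + 1) * r + i) (β * r + j) * gDq r ((c : ℤ) - ((β * r + j : ℕ) : ℤ)))
      = (∑ j ∈ Finset.range r,
          HfD r (α * r + i) (β * r + j) * gDq r ((c : ℤ) - ((β * r + j : ℕ) : ℤ)))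
        + ((if β = α then T1 else 0) + (if β = α + 1 then T2 else 0)) := by
    intro β hβ
    have hs : ∀ j ∈ Finset.range r,
        HfD r ((α + 1) * r + i) (β * r + j) * gDq r ((c : ℤ) - ((β * r + j : ℕ) : ℤ))
        = HfD r (α * r + i) (β * r + j) * gDq r ((c : ℤ) - ((β * r + j : ℕ) : ℤ))
          + ((if β = α then (if i ≤ j then -(gDq r ((c : ℤ) - ((β * r + j : ℕ) : ℤ))) else 0) else 0)
            + (if β = α + 1 then (if j ≤ i then -(gDq r ((c : ℤ) - ((β * r + j : ℕ) : ℤ))) else 0) else 0)) := by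
      intro j hj
      rw [Hf_stepA r hr hα1 hir (Finset.mem_range.1 hj)]
      split_ifs <;> first | (exfalso; omega) | ring
    rw [Finset.sum_congr rfl hs, Finset.sum_add_distrib, Finset.sum_add_distrib]
    congr 1
    congr 1
    · by_cases hb : β = α
      · rw [hb]
        rw [if_pos rfl]
        have e : ∀ j ∈ Finset.range r,
            (if (α : ℕ) = α then (if i ≤ j then -(gDq r ((c : ℤ) - ((α * r + j : ℕ) : ℤ))) else 0) else 0)
            = (if i ≤ j then -(gDq r ((c : ℤ) - ((α * r + j : ℕ) : ℤ))) else 0) :=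
          fun j _ => if_pos rfl
        rw [Finset.sum_congr rfl e, hT1, inner_tail r hr hre α i hir c]
      · rw [if_neg hb]
        apply Finset.sum_eq_zero
        intro j _
        rw [if_neg hb]
    · by_cases hb : β = α + 1
      · rw [hb]
        rw [if_pos rfl]
        have e : ∀ j ∈ Finset.range r,
            (if (α + 1 : ℕ) = α + 1 then
              (if j ≤ i then -(gDq r ((c : ℤ) - (((α + 1) * r + j : ℕ) : ℤ))) else 0) else 0)
            = (if j ≤ i then -(gDq r ((c : ℤ) - (((α + 1) * r + j : ℕ) : ℤ))) else 0) :=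
          fun j _ => if_pos rfl
        rw [Finset.sum_congr rfl e, hT2, inner_head r hr hre α i hir c]
      · rw [if_neg hb]
        apply Finset.sum_eq_zero
        intro j _
        rw [if_neg hb]
  rw [Finset.sum_congr rfl key, Finset.sum_add_distrib, Finset.sum_add_distrib,
    Finset.sum_ite_eq' (Finset.range r) α (fun _ => T1),
    Finset.sum_ite_eq' (Finset.range r) (α + 1) (fun _ => T2),
    if_pos (Finset.mem_range.2 (by omega)), if_pos (Finset.mem_range.2 hα1)]
  rw [hT1, hT2]
  rw [show (c : ℤ) - (α : ℤ) * (r : ℤ) - (r : ℤ) = (c : ℤ) - ((α : ℤ) + 1) * (r : ℤ) from by ring]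
  rw [show (c : ℤ) - ((α : ℤ) + 1) * (r : ℤ) - ((i : ℤ) + 1)
      = (c : ℤ) - (α : ℤ) * (r : ℤ) - (i : ℤ) - (r : ℤ) - 1 from by ring]
  ring

private lemma stepA (r : ℕ) (hr : 2 ≤ r) (hre : Even r) {a : ℕ} (h : a + r < r * r) (c : ℕ) :
    SsumD r (a + r) c = SsumD r a c
      + (phiq r ((c : ℤ) - (a : ℤ) - (r : ℤ) - 1) - phiq r ((c : ℤ) - (a : ℤ))) := by
  have hr0 : 0 < r := by omega
  set α := a / r with hαdef
  set i := a % r with hidef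
  have hir : i < r := Nat.mod_lt _ hr0
  have ha : α * r + i = a := by rw [hαdef, hidef, Nat.mul_comm]; exact Nat.div_add_mod a r
  have hα1 : α + 1 < r := by
    have h2 : (r - 1) * r + r = r * r := by
      obtain ⟨k, hk⟩ := Nat.exists_eq_add_of_le hr
      subst hk
      have e : 2 + k - 1 = k + 1 := by omega
      rw [e]
      ring
    have h3 : a + r < (r - 1) * r + r := by rw [h2]; exact h
    have h4 : a < (r - 1) * r := Nat.lt_of_add_lt_add_right h3
    have h5 : a / r < r - 1 := (Nat.div_lt_iff_lt_mul hr0).2 h4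
    omega
  have hacast : ((a : ℕ) : ℤ) = (α : ℤ) * (r : ℤ) + (i : ℤ) := by
    rw [← ha]; push_cast; ring
  have e1 : SsumD r (a + r) c = SsumD r ((α + 1) * r + i) c := by
    have : a + r = (α + 1) * r + i := by rw [← ha]; ring
    rw [this]
  have e2 : SsumD r a c = SsumD r (α * r + i) c := by rw [← ha]
  have e3 : (c : ℤ) - (a : ℤ) - (r : ℤ) - 1
      = (c : ℤ) - (α : ℤ) * (r : ℤ) - (i : ℤ) - (r : ℤ) - 1 := by rw [hacast]; ring
  have e4 : (c : ℤ) - (a : ℤ) = (c : ℤ) - (α : ℤ) * (r : ℤ) - (i : ℤ) := by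
    rw [hacast]; ring
  rw [e1, e2, e3, e4]
  exact stepA' r hr hre hα1 hir c

private lemma SsumD_eq (r : ℕ) (hr : 2 ≤ r) (hre : Even r) :
    ∀ a, a < r * r → ∀ c, c < r * r → SsumD r a c = if a = c then 1 else 0 := by
  intro a
  induction a using Nat.strong_induction_on with
  | _ a IH =>
    intro ha c hc
    have hcz : ((c : ℕ) : ℤ) < (r : ℤ) * (r : ℤ) := by exact_mod_cast hc
    by_cases har : a < r
    · rcases Nat.eq_zero_or_pos a with h0 | h0
      · subst h0
        rw [base0 r hr hre c]
        have hb1 : 1 - (r : ℤ) ≤ ((c : ℕ) : ℤ) := by omega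
        have hb2 : ((c : ℕ) : ℤ) ≤ (r : ℤ) * (r : ℤ) - 1 := by linarith
        rw [gam_l3 r hr hre ((c : ℕ) : ℤ) hb1 hb2]
        rw [if_neg (by omega : ¬ ((c : ℕ) : ℤ) = -1)]
        by_cases h : c = 0
        · subst h; norm_num
        · rw [if_neg (by omega : ¬ ((c : ℕ) : ℤ) = 0), if_neg (by omega : ¬ (0 = c))]
          norm_num
      · have h1 : (a - 1) + 1 = a := by omega
        have hstep := stepI r hr hre (i := a - 1) (by omega : (a - 1) + 1 < r) c
        rw [h1] at hstep
        rw [hstep, IH (a - 1) (by omega) (lt_of_le_of_lt (Nat.sub_le a 1) ha) c hc]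
        have hb1 : 1 - (r : ℤ) ≤ ((c : ℕ) : ℤ) - ((a - 1 : ℕ) : ℤ) - 1 := by omega
        have hb2 : ((c : ℕ) : ℤ) - ((a - 1 : ℕ) : ℤ) - 1 ≤ (r : ℤ) * (r : ℤ) - 1 := by
          have h2 : (0 : ℤ) ≤ ((a - 1 : ℕ) : ℤ) := by omega
          linarith
        rw [gam_l3 r hr hre _ hb1 hb2]
        have i1 : (((c : ℕ) : ℤ) - ((a - 1 : ℕ) : ℤ) - 1 = 0) ↔ a = c := by omega
        have i2 : (((c : ℕ) : ℤ) - ((a - 1 : ℕ) : ℤ) - 1 = -1) ↔ a - 1 = c := by omega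
        simp only [i1, i2]
        split_ifs <;> first | (exfalso; omega) | norm_num
    · push_neg at har
      have h1 : (a - r) + r = a := by omega
      have hstep := stepA r hr hre (a := a - r) (by rw [h1]; exact ha) c
      rw [h1] at hstep
      rw [hstep, IH (a - r) (by omega) (lt_of_le_of_lt (Nat.sub_le a r) ha) c hc]
      rw [phi_l4 r hr hre (((c : ℕ) : ℤ) - ((a - r : ℕ) : ℤ))]
      have i1 : (((c : ℕ) : ℤ) - ((a - r : ℕ) : ℤ) = (r : ℤ)) ↔ a = c := by omega
      have i2 : (((c : ℕ) : ℤ) - ((a - r : ℕ) : ℤ) = 0) ↔ a - r = c := by omega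
      simp only [i1, i2]
      split_ifs <;> first | (exfalso; omega) | norm_num

open Matrix

theorem stmt_11 (r : ℕ) (hr : 2 ≤ r) (hre : Even r)
    (H : Matrix (Fin (r * r)) (Fin (r * r)) ℚ)
    (hH : ∀ a b : Fin (r * r), H a b =
      if (a : ℕ) / r = (b : ℕ) / r then 0
      else if (a : ℕ) / r < (b : ℕ) / r then
        (if (b : ℕ) % r ≤ (a : ℕ) % r then 1 else 0)
      else (if (a : ℕ) % r ≤ (b : ℕ) % r then -1 else 0)) :
    IsUnit H.det ∧
    (∀ a b a' b' : Fin (r * r),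
      ((a' : ℕ) : ℤ) - ((a : ℕ) : ℤ) = ((b' : ℕ) : ℤ) - ((b : ℕ) : ℤ) →
      H⁻¹ a b = H⁻¹ a' b') ∧
    (∀ a : Fin (r * r), H⁻¹ a a = 0) ∧
    (∀ a b : Fin (r * r), a < b →
      (H⁻¹ a b =
        if ((b : ℕ) - (a : ℕ)) % (r + 1) = 1 then 0
        else if ((b : ℕ) - (a : ℕ)) % (r + 1) = 0 ∨ Odd (((b : ℕ) - (a : ℕ)) % (r + 1))
          then 1 else -1) ∧
      H⁻¹ b a = - H⁻¹ a b) := by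
  classical
  set K : Matrix (Fin (r * r)) (Fin (r * r)) ℚ :=
    Matrix.of (fun a b : Fin (r * r) => gDq r (((b : ℕ) : ℤ) - ((a : ℕ) : ℤ))) with hK
  have hKapp : ∀ a b : Fin (r * r), K a b = gDq r (((b : ℕ) : ℤ) - ((a : ℕ) : ℤ)) := by
    intro a b
    rw [hK]
    rfl
  have hHK : H * K = 1 := by
    ext a c
    rw [Matrix.mul_apply, Matrix.one_apply]
    have hterm : ∀ b ∈ Finset.univ (α := Fin (r * r)), H a b * K b c =
        (fun k : ℕ => HfD r (a : ℕ) k * gDq r (((c : ℕ) : ℤ) - (k : ℤ))) ((b : ℕ)) := by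
      intro b _
      rw [hH a b, hKapp b c]
      rfl
    rw [Finset.sum_congr rfl hterm,
      Fin.sum_univ_eq_sum_range (fun k : ℕ => HfD r (a : ℕ) k * gDq r (((c : ℕ) : ℤ) - (k : ℤ)))
        (r * r)]
    have hs := SsumD_eq r hr hre (a : ℕ) a.isLt (c : ℕ) c.isLt
    unfold SsumD at hs
    rw [hs]
    by_cases hac : a = c
    · rw [if_pos hac, if_pos (by rw [hac])]
    · rw [if_neg hac, if_neg (fun hh => hac (Fin.ext hh))]
  have hdet : IsUnit H.det := Matrix.isUnit_det_of_right_inverse hHK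
  have hinv : H⁻¹ = K := Matrix.inv_eq_right_inv hHK
  refine ⟨hdet, ?_, ?_, ?_⟩
  · intro a b a' b' hdiff
    rw [hinv, hKapp, hKapp]
    congr 1
    omega
  · intro a
    rw [hinv, hKapp]
    simp [gDq]
  · intro a b hab
    have habn : (a : ℕ) < (b : ℕ) := hab
    constructor
    · rw [hinv, hKapp]
      have hd : (0 : ℤ) < ((b : ℕ) : ℤ) - ((a : ℕ) : ℤ) := by omega
      unfold gDq hDq
      rw [if_pos hd]
      have hcast : (((b : ℕ) : ℤ) - ((a : ℕ) : ℤ)) % ((r : ℤ) + 1)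
          = ((((b : ℕ) - (a : ℕ)) % (r + 1) : ℕ) : ℤ) := by
        have h1 : ((b : ℕ) : ℤ) - ((a : ℕ) : ℤ) = (((b : ℕ) - (a : ℕ) : ℕ) : ℤ) := by omega
        rw [h1]
        push_cast
        rfl
      rw [hcast]
      have c1 : (((((b : ℕ) - (a : ℕ)) % (r + 1) : ℕ) : ℤ) = 1) ↔
          ((b : ℕ) - (a : ℕ)) % (r + 1) = 1 := by omega
      have c2 : ((((((b : ℕ) - (a : ℕ)) % (r + 1) : ℕ) : ℤ) = 0 ∨
          ((((b : ℕ) - (a : ℕ)) % (r + 1) : ℕ) : ℤ) % 2 = 1)) ↔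
          (((b : ℕ) - (a : ℕ)) % (r + 1) = 0 ∨ Odd (((b : ℕ) - (a : ℕ)) % (r + 1))) := by
        rw [Nat.odd_iff]
        omega
      simp only [c1, c2]
    · rw [hinv, hKapp, hKapp]
      have e : ((a : ℕ) : ℤ) - ((b : ℕ) : ℤ) = -(((b : ℕ) : ℤ) - ((a : ℕ) : ℤ)) := by ring
      rw [e, gDq_odd]
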